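/- Let (X,d) and (P,μ) be metric spaces and suppose the family (f_p)_{p∈P} of proper, bounded-below functions satisfies the uniform epi-continuity conditions (1) and (2). Then the value function p ↦ inf_X f_p is continuous on P. -/

import Mathlib

noncomputable def reg {X : Type*} [MetricSpace X] (v : X → EReal) (ε : ℝ) (x : X) : EReal :=
  ⨅ y ∈ Metric.closedBall x ε, v y

/-- Under uniform epi-continuity (conditions (1) and (2)), the value function
`p ↦ inf_X f_p` is continuous. -/
theorem value_function_continuous {X P : Type*} [MetricSpace X] [MetricSpace P]
    (f : P → X → EReal)
    (hproper : ∀ p, ∃ x, f p x ≠ ⊤)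
    (hbdd : ∀ p, ∃ m : ℝ, ∀ x, (m : EReal) ≤ f p x)
    (hcond1 : ∀ (p : P) (x : X) (ε : ℝ), 0 < ε → ∃ δ : ℝ, 0 < δ ∧
      ∀ q ∈ Metric.closedBall p δ, ∃ xq ∈ Metric.closedBall x ε,
        f q xq ≤ f p x + (ε : EReal))
    (hcond2 : ∀ (p : P) (ε : ℝ), 0 < ε → ∃ δ : ℝ, 0 < δ ∧
      ∀ (x : X), ∀ q ∈ Metric.closedBall p δ,
        reg (f p) ε x - (ε : EReal) ≤ f q x) :
    Continuous (fun p => ⨅ x, f p x) := by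
  rw [continuous_iff_continuousAt]
  intro p
  set g : P → EReal := fun q => ⨅ x, f q x with hg
  obtain ⟨m, hm⟩ := hbdd p
  obtain ⟨x0, hx0⟩ := hproper p
  have hbot : (m : EReal) ≤ g p := le_iInf hm
  have htop : g p < ⊤ := lt_of_le_of_lt (iInf_le _ x0) (lt_top_iff_ne_top.2 hx0)
  have hane : g p ≠ ⊥ := fun h => by
    rw [h, le_bot_iff] at hbot
    exact (EReal.coe_ne_bot m) hbot
  set r : ℝ := (g p).toReal with hr
  have har : g p = (r : EReal) := (EReal.coe_toReal htop.ne hane).symm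
  -- Upper estimate
  have E1 : ∀ ε : ℝ, 0 < ε → ∃ δ : ℝ, 0 < δ ∧
      ∀ q ∈ Metric.closedBall p δ, g q ≤ ((r + 2 * ε : ℝ) : EReal) := by
    intro ε hε
    have hlt : g p < ((r + ε : ℝ) : EReal) := by
      rw [har, EReal.coe_lt_coe_iff]; linarith
    obtain ⟨x, hx⟩ := iInf_lt_iff.1 hlt
    obtain ⟨δ, hδ, hδ'⟩ := hcond1 p x ε hε
    refine ⟨δ, hδ, fun q hq => ?_⟩
    obtain ⟨xq, _, hxq⟩ := hδ' q hq
    calc g q ≤ f q xq := iInf_le _ xq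
      _ ≤ f p x + (ε : EReal) := hxq
      _ ≤ ((r + ε : ℝ) : EReal) + (ε : EReal) := by
          exact add_le_add_left hx.le _
      _ = ((r + 2 * ε : ℝ) : EReal) := by
          rw [← EReal.coe_add]; ring_nf
  -- Lower estimate
  have E2 : ∀ ε : ℝ, 0 < ε → ∃ δ : ℝ, 0 < δ ∧
      ∀ q ∈ Metric.closedBall p δ, ((r - ε : ℝ) : EReal) ≤ g q := by
    intro ε hε
    obtain ⟨δ, hδ, hδ'⟩ := hcond2 p ε hε
    refine ⟨δ, hδ, fun q hq => le_iInf fun x => ?_⟩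
    have h1 : g p ≤ reg (f p) ε x :=
      le_iInf fun y => le_iInf fun _ => iInf_le _ y
    calc ((r - ε : ℝ) : EReal) = g p - (ε : EReal) := by
          rw [har, ← EReal.coe_sub]
      _ ≤ reg (f p) ε x - (ε : EReal) := by
          exact EReal.sub_le_sub h1 le_rfl
      _ ≤ f q x := hδ' x q hq
  rw [ContinuousAt]
  rw [tendsto_order]
  constructor
  · intro b hb
    rw [har] at hb
    obtain ⟨c, hbc, hcr⟩ := EReal.exists_between_coe_real hb
    rw [EReal.coe_lt_coe_iff] at hcr
    have hε : (0 : ℝ) < r - c := by linarith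
    obtain ⟨δ, hδ, hδ'⟩ := E2 (r - c) hε
    filter_upwards [Metric.closedBall_mem_nhds p hδ] with q hq
    have := hδ' q hq
    have hc : ((r - (r - c) : ℝ) : EReal) = (c : EReal) := by
      rw [show r - (r - c) = c by ring]
    calc b < (c : EReal) := hbc
      _ = _ := hc.symm
      _ ≤ g q := this
  · intro b hb
    rw [har] at hb
    obtain ⟨c, hrc, hcb⟩ := EReal.exists_between_coe_real hb
    rw [EReal.coe_lt_coe_iff] at hrc
    have hε : (0 : ℝ) < (c - r) / 2 := by linarith
    obtain ⟨δ, hδ, hδ'⟩ := E1 ((c - r) / 2) hε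
    filter_upwards [Metric.closedBall_mem_nhds p hδ] with q hq
    have := hδ' q hq
    calc g q ≤ ((r + 2 * ((c - r) / 2) : ℝ) : EReal) := this
      _ = (c : EReal) := by rw [show r + 2 * ((c - r) / 2) = c by ring]
      _ < b := hcb
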